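/- Let J = (J_1,…,J_g) ∈ M_d(ℂ)^g be linearly independent with the span of J_1,…,J_g closed under multiplication, let Ξ ∈ M_g(ℂ)^g be the unique tuple with J_k J_j = Σ_{s=1}^g (Ξ_j)_{k,s} J_s, and assume in addition that D_J(n) is a bounded subset of M_n(ℂ)^g for every n. Then for every n the convexotonic map q(X) = X(I+Λ_Ξ(X))^{-1} is a well-defined bijection from D_J(n) onto B_J(n), with inverse p(Y) = Y(I−Λ_Ξ(Y))^{-1}: for every X ∈ D_J(n), I + Λ_Ξ(X) is invertible and q(X) ∈ B_J(n); for every Y ∈ B_J(n), I − Λ_Ξ(Y) is invertible and p(Y) ∈ D_J(n); and p(q(X)) = X, q(p(Y)) = Y. -/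

import Mathlib

open scoped Kronecker Matrix Matrix.Norms.L2Operator ComplexOrder

noncomputable section

/-- `Λ_A(X) = Σⱼ Aⱼ ⊗ Xⱼ` (Kronecker product), a `dn × dn` matrix. -/
def lamK {g d n : ℕ} (A : Fin g → Matrix (Fin d) (Fin d) ℂ)
    (X : Fin g → Matrix (Fin n) (Fin n) ℂ) :
    Matrix (Fin d × Fin n) (Fin d × Fin n) ℂ :=
  ∑ j, (A j) ⊗ₖ (X j)

/-- `L_A(X) = I + Λ_A(X) + Λ_A(X)^*`. -/
def Lpen {g d n : ℕ} (A : Fin g → Matrix (Fin d) (Fin d) ℂ)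
    (X : Fin g → Matrix (Fin n) (Fin n) ℂ) :
    Matrix (Fin d × Fin n) (Fin d × Fin n) ℂ :=
  1 + lamK A X + (lamK A X)ᴴ

/-- The `n × n` block of a `gn × gn` matrix in position `(j, i)`. -/
def blk {g n : ℕ} (M : Matrix (Fin g × Fin n) (Fin g × Fin n) ℂ) (j i : Fin g) :
    Matrix (Fin n) (Fin n) ℂ :=
  fun a b => M (j, a) (i, b)

/-- The convexotonic map `p(X) = X (I - Λ_Ξ(X))⁻¹`, given blockwise by
`p(X)ᵢ = Σⱼ Xⱼ [(I - Λ_Ξ(X))⁻¹]_{j,i}`. -/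
def pmap {g n : ℕ} (Ξ : Fin g → Matrix (Fin g) (Fin g) ℂ)
    (X : Fin g → Matrix (Fin n) (Fin n) ℂ) : Fin g → Matrix (Fin n) (Fin n) ℂ :=
  fun i => ∑ j, X j * blk ((1 - lamK Ξ X)⁻¹) j i

/-- The convexotonic map `q(X) = X (I + Λ_Ξ(X))⁻¹`, given blockwise by
`q(X)ᵢ = Σⱼ Xⱼ [(I + Λ_Ξ(X))⁻¹]_{j,i}`. -/
def qmap {g n : ℕ} (Ξ : Fin g → Matrix (Fin g) (Fin g) ℂ)
    (X : Fin g → Matrix (Fin n) (Fin n) ℂ) : Fin g → Matrix (Fin n) (Fin n) ℂ :=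
  fun i => ∑ j, X j * blk ((1 + lamK Ξ X)⁻¹) j i

/-- A tuple `Ξ` of `g × g` matrices is convexotonic if
`Ξ_k Ξ_j = Σ_s (Ξ_j)_{k,s} Ξ_s` for all `j, k`. -/
def Convexotonic {g : ℕ} (Ξ : Fin g → Matrix (Fin g) (Fin g) ℂ) : Prop :=
  ∀ j k, Ξ k * Ξ j = ∑ s, (Ξ j) k s • Ξ s

/-- `Λ_A(α) = Σⱼ αⱼ Aⱼ` for a scalar point `α ∈ ℂ^g`. -/
def lamScalar {g d : ℕ} (A : Fin g → Matrix (Fin d) (Fin d) ℂ) (α : Fin g → ℂ) :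
    Matrix (Fin d) (Fin d) ℂ :=
  ∑ j, α j • A j

/-- A hyperbasis of `ℂ^d`: `d+1` vectors, each `d` of which form a basis. -/
def Hyperbasis {d : ℕ} (u : Fin (d + 1) → (Fin d → ℂ)) : Prop :=
  ∀ i : Fin (d + 1),
    LinearIndependent ℂ (fun j : {j : Fin (d + 1) // j ≠ i} => u j) ∧
    Submodule.span ℂ (Set.range fun j : {j : Fin (d + 1) // j ≠ i} => u j) = ⊤

/-- The tuple `A ∈ M_d(ℂ)^g` is sv-generic. -/
def SvGeneric {g d : ℕ} (A : Fin g → Matrix (Fin d) (Fin d) ℂ) : Prop :=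
  (∃ (α : Fin (d + 1) → (Fin g → ℂ)) (u : Fin (d + 1) → (Fin d → ℂ)),
    (∀ j, (1 - (lamScalar A (α j))ᴴ * lamScalar A (α j)).PosSemidef ∧
      u j ≠ 0 ∧
      LinearMap.ker (Matrix.mulVecLin (1 - (lamScalar A (α j))ᴴ * lamScalar A (α j)))
        = Submodule.span ℂ {u j}) ∧
    Hyperbasis u) ∧
  (∃ (β : Fin d → (Fin g → ℂ)) (v : Fin d → (Fin d → ℂ)),
    (∀ k, (1 - lamScalar A (β k) * (lamScalar A (β k))ᴴ).PosSemidef ∧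
      v k ≠ 0 ∧
      LinearMap.ker (Matrix.mulVecLin (1 - lamScalar A (β k) * (lamScalar A (β k))ᴴ))
        = Submodule.span ℂ {v k}) ∧
    LinearIndependent ℂ v ∧ Submodule.span ℂ (Set.range v) = ⊤)

/-- Evaluation of a `k × l` matrix of noncommutative polynomials at a tuple of
`n × n` matrices, yielding a `kn × ln` matrix. -/
def polyEval {k l g n : ℕ} (Q : Matrix (Fin k) (Fin l) (FreeAlgebra ℂ (Fin g)))
    (X : Fin g → Matrix (Fin n) (Fin n) ℂ) :
    Matrix (Fin k × Fin n) (Fin l × Fin n) ℂ :=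
  fun a b => (FreeAlgebra.lift ℂ X) (Q a.1 b.1) a.2 b.2


section aux
set_option linter.unusedSectionVars false

variable {g d n : ℕ}

def rmul (X : Fin g → Matrix (Fin n) (Fin n) ℂ)
    (M : Matrix (Fin g × Fin n) (Fin g × Fin n) ℂ) : Fin g → Matrix (Fin n) (Fin n) ℂ :=
  fun i => ∑ j, X j * blk M j i

def mulX (Ξ : Fin g → Matrix (Fin g) (Fin g) ℂ)
    (X Y : Fin g → Matrix (Fin n) (Fin n) ℂ) : Fin g → Matrix (Fin n) (Fin n) ℂ :=
  fun s => ∑ k, ∑ j, (Ξ j) k s • (X k * Y j)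

section kron
variable {ι : Type*} [Fintype ι]

lemma sum_kron (f : ι → Matrix (Fin d) (Fin d) ℂ) (B : Matrix (Fin n) (Fin n) ℂ) :
    (∑ i, f i) ⊗ₖ B = ∑ i, (f i) ⊗ₖ B := by
  ext ⟨c, a⟩ ⟨e, b⟩
  simp [Matrix.kroneckerMap_apply, Matrix.sum_apply, Finset.sum_mul]

lemma smul_kron (c : ℂ) (A : Matrix (Fin d) (Fin d) ℂ) (B : Matrix (Fin n) (Fin n) ℂ) :
    (c • A) ⊗ₖ B = c • (A ⊗ₖ B) := by
  ext ⟨x, a⟩ ⟨e, b⟩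
  simp [Matrix.kroneckerMap_apply, Matrix.smul_apply, mul_assoc]

lemma kron_sum (A : Matrix (Fin d) (Fin d) ℂ) (f : ι → Matrix (Fin n) (Fin n) ℂ) :
    A ⊗ₖ (∑ i, f i) = ∑ i, A ⊗ₖ (f i) := by
  ext ⟨c, a⟩ ⟨e, b⟩
  simp [Matrix.kroneckerMap_apply, Matrix.sum_apply, Finset.mul_sum]

lemma kron_smul (c : ℂ) (A : Matrix (Fin d) (Fin d) ℂ) (B : Matrix (Fin n) (Fin n) ℂ) :
    A ⊗ₖ (c • B) = c • (A ⊗ₖ B) := by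
  ext ⟨x, a⟩ ⟨e, b⟩
  simp [Matrix.kroneckerMap_apply, Matrix.smul_apply]
  ring

end kron

lemma lamK_apply (A : Fin g → Matrix (Fin d) (Fin d) ℂ)
    (X : Fin g → Matrix (Fin n) (Fin n) ℂ) (c e : Fin d) (a b : Fin n) :
    lamK A X (c, a) (e, b) = ∑ j, A j c e * X j a b := by
  simp [lamK, Matrix.sum_apply, Matrix.kroneckerMap_apply]

lemma lamK_add (A : Fin g → Matrix (Fin d) (Fin d) ℂ)
    (X Y : Fin g → Matrix (Fin n) (Fin n) ℂ) :
    lamK A (X + Y) = lamK A X + lamK A Y := by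
  ext ⟨c, a⟩ ⟨e, b⟩
  simp [lamK_apply, mul_add, Finset.sum_add_distrib]

lemma lamK_sub (A : Fin g → Matrix (Fin d) (Fin d) ℂ)
    (X Y : Fin g → Matrix (Fin n) (Fin n) ℂ) :
    lamK A (X - Y) = lamK A X - lamK A Y := by
  ext ⟨c, a⟩ ⟨e, b⟩
  simp [lamK_apply, mul_sub, Finset.sum_sub_distrib, Matrix.sub_apply]

lemma lamK_neg (A : Fin g → Matrix (Fin d) (Fin d) ℂ)
    (X : Fin g → Matrix (Fin n) (Fin n) ℂ) :
    lamK A (-X) = - lamK A X := by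
  ext ⟨c, a⟩ ⟨e, b⟩
  simp [lamK_apply, Matrix.neg_apply]

lemma lamK_smul (A : Fin g → Matrix (Fin d) (Fin d) ℂ) (t : ℂ)
    (X : Fin g → Matrix (Fin n) (Fin n) ℂ) :
    lamK A (t • X) = t • lamK A X := by
  ext ⟨c, a⟩ ⟨e, b⟩
  rw [lamK_apply, Matrix.smul_apply, lamK_apply, Finset.smul_sum]
  refine Finset.sum_congr rfl fun j _ => ?_
  simp [Matrix.smul_apply]
  ring

lemma lamK_eq_zero {A : Fin g → Matrix (Fin d) (Fin d) ℂ}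
    (hli : LinearIndependent ℂ A) {X : Fin g → Matrix (Fin n) (Fin n) ℂ}
    (h : lamK A X = 0) : X = 0 := by
  funext k
  ext a b
  have h3 : (∑ j, (X j a b) • A j) = 0 := by
    ext c e
    have := congrFun (congrFun h (c, a)) (e, b)
    rw [lamK_apply] at this
    simpa [Matrix.sum_apply, mul_comm] using this
  have := Fintype.linearIndependent_iff.mp hli _ h3 k
  simpa using this

lemma lamK_mul {A : Fin g → Matrix (Fin d) (Fin d) ℂ}
    {Ξ : Fin g → Matrix (Fin g) (Fin g) ℂ}
    (h : ∀ k j, A k * A j = ∑ s, (Ξ j) k s • A s)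
    (X Y : Fin g → Matrix (Fin n) (Fin n) ℂ) :
    lamK A X * lamK A Y = lamK A (mulX Ξ X Y) := by
  have lhs : lamK A X * lamK A Y = ∑ k, ∑ j, ∑ s, (Ξ j) k s • (A s ⊗ₖ (X k * Y j)) := by
    rw [lamK, lamK, Finset.sum_mul_sum]
    refine Finset.sum_congr rfl fun k _ => Finset.sum_congr rfl fun j _ => ?_
    rw [← Matrix.mul_kronecker_mul, h k j, sum_kron]
    exact Finset.sum_congr rfl fun s _ => smul_kron _ _ _
  have rhs : lamK A (mulX Ξ X Y) = ∑ s, ∑ k, ∑ j, (Ξ j) k s • (A s ⊗ₖ (X k * Y j)) := by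
    unfold lamK mulX
    refine Finset.sum_congr rfl fun s _ => ?_
    rw [kron_sum]
    refine Finset.sum_congr rfl fun k _ => ?_
    rw [kron_sum]
    exact Finset.sum_congr rfl fun j _ => kron_smul _ _ _
  have sum_comm3 : ∀ (f : Fin g → Fin g → Fin g → Matrix (Fin d × Fin n) (Fin d × Fin n) ℂ),
      ∑ s, ∑ k, ∑ j, f k j s = ∑ k, ∑ j, ∑ s, f k j s := by
    intro f
    rw [Finset.sum_comm]
    exact Finset.sum_congr rfl fun k _ => Finset.sum_comm
  rw [lhs, rhs]
  exact (sum_comm3 _).symm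

/-- structure constants transfer to `Ξ` itself -/
lemma xi_mul {J : Fin g → Matrix (Fin d) (Fin d) ℂ}
    {Ξ : Fin g → Matrix (Fin g) (Fin g) ℂ}
    (hli : LinearIndependent ℂ J)
    (hΞ : ∀ k j, J k * J j = ∑ s, (Ξ j) k s • J s) :
    ∀ k j, Ξ k * Ξ j = ∑ s, (Ξ j) k s • Ξ s := by
  intro k j
  ext l t
  have assoc : (J l * J k) * J j = J l * (J k * J j) := mul_assoc _ _ _
  rw [hΞ l k, hΞ k j, Finset.sum_mul, Finset.mul_sum] at assoc
  have assoc3 : ∑ u, (∑ m, (Ξ k) l m * (Ξ j) m u) • J u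
      = ∑ u, (∑ s, (Ξ j) k s * (Ξ s) l u) • J u := by
    calc ∑ u, (∑ m, (Ξ k) l m * (Ξ j) m u) • J u
        = ∑ m, ∑ u, ((Ξ k) l m * (Ξ j) m u) • J u := by
          rw [Finset.sum_comm]
          exact Finset.sum_congr rfl fun u _ => Finset.sum_smul
      _ = ∑ m, (Ξ k) l m • (J m * J j) := by
          refine Finset.sum_congr rfl fun m _ => ?_
          rw [hΞ m j, Finset.smul_sum]
          exact Finset.sum_congr rfl fun u _ => (smul_smul _ _ _).symm
      _ = ∑ s, (Ξ j) k s • (J l * J s) := by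
          simpa [Matrix.smul_mul, Matrix.mul_smul] using assoc
      _ = ∑ s, ∑ u, ((Ξ j) k s * (Ξ s) l u) • J u := by
          refine Finset.sum_congr rfl fun s _ => ?_
          rw [hΞ l s, Finset.smul_sum]
          exact Finset.sum_congr rfl fun u _ => (smul_smul _ _ _)
      _ = ∑ u, (∑ s, (Ξ j) k s * (Ξ s) l u) • J u := by
          rw [Finset.sum_comm]
          exact Finset.sum_congr rfl fun u _ => Finset.sum_smul.symm
  have hz : ∑ u, ((∑ m, (Ξ k) l m * (Ξ j) m u) - (∑ s, (Ξ j) k s * (Ξ s) l u)) • J u = 0 := by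
    simp only [sub_smul, Finset.sum_sub_distrib, assoc3, sub_self]
  have key := Fintype.linearIndependent_iff.mp hli _ hz t
  have key2 := sub_eq_zero.mp key
  simpa [Matrix.mul_apply, Matrix.sum_apply, Matrix.smul_apply] using key2

lemma blk_one (j i : Fin g) :
    blk (1 : Matrix (Fin g × Fin n) (Fin g × Fin n) ℂ) j i
      = if j = i then (1 : Matrix (Fin n) (Fin n) ℂ) else 0 := by
  ext a b
  by_cases h : j = i <;>
    simp [blk, Matrix.one_apply, Prod.ext_iff, h]

lemma rmul_one (X : Fin g → Matrix (Fin n) (Fin n) ℂ) : rmul X 1 = X := by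
  funext i
  rw [rmul, Finset.sum_eq_single i]
  · simp [blk_one]
  · intro j _ hji
    simp [blk_one, hji]
  · simp

lemma blk_mul (M N : Matrix (Fin g × Fin n) (Fin g × Fin n) ℂ) (j i : Fin g) :
    blk (M * N) j i = ∑ k, blk M j k * blk N k i := by
  ext a b
  simp [blk, Matrix.mul_apply, Matrix.sum_apply, Fintype.sum_prod_type]

lemma rmul_mul (X : Fin g → Matrix (Fin n) (Fin n) ℂ)
    (M N : Matrix (Fin g × Fin n) (Fin g × Fin n) ℂ) :
    rmul X (M * N) = rmul (rmul X M) N := by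
  funext i
  calc (rmul X (M * N)) i = ∑ j, ∑ k, X j * (blk M j k * blk N k i) := by
        unfold rmul
        refine Finset.sum_congr rfl fun j _ => ?_
        rw [blk_mul, Finset.mul_sum]
    _ = ∑ k, (∑ j, X j * blk M j k) * blk N k i := by
        rw [Finset.sum_comm]
        refine Finset.sum_congr rfl fun k _ => ?_
        rw [Finset.sum_mul]
        exact Finset.sum_congr rfl fun j _ => (mul_assoc _ _ _).symm
    _ = (rmul (rmul X M) N) i := rfl

lemma blk_add (M N : Matrix (Fin g × Fin n) (Fin g × Fin n) ℂ) (j i : Fin g) :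
    blk (M + N) j i = blk M j i + blk N j i := by
  ext a b; simp [blk]

lemma blk_sub (M N : Matrix (Fin g × Fin n) (Fin g × Fin n) ℂ) (j i : Fin g) :
    blk (M - N) j i = blk M j i - blk N j i := by
  ext a b; simp [blk]

lemma rmul_add (X : Fin g → Matrix (Fin n) (Fin n) ℂ)
    (M N : Matrix (Fin g × Fin n) (Fin g × Fin n) ℂ) :
    rmul X (M + N) = rmul X M + rmul X N := by
  funext i
  simp [rmul, blk_add, mul_add, Finset.sum_add_distrib]

lemma rmul_sub (X : Fin g → Matrix (Fin n) (Fin n) ℂ)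
    (M N : Matrix (Fin g × Fin n) (Fin g × Fin n) ℂ) :
    rmul X (M - N) = rmul X M - rmul X N := by
  funext i
  simp [rmul, blk_sub, mul_sub, Finset.sum_sub_distrib]

lemma blk_lamK (Ξ : Fin g → Matrix (Fin g) (Fin g) ℂ)
    (Y : Fin g → Matrix (Fin n) (Fin n) ℂ) (k i : Fin g) :
    blk (lamK Ξ Y) k i = ∑ j, (Ξ j) k i • Y j := by
  ext a b
  simp [blk, lamK_apply, Matrix.sum_apply, Matrix.smul_apply]

lemma rmul_lamK (Ξ : Fin g → Matrix (Fin g) (Fin g) ℂ)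
    (X Y : Fin g → Matrix (Fin n) (Fin n) ℂ) :
    rmul X (lamK Ξ Y) = mulX Ξ X Y := by
  funext i
  unfold rmul mulX
  refine Finset.sum_congr rfl fun k _ => ?_
  rw [blk_lamK, Finset.mul_sum]
  exact Finset.sum_congr rfl fun j _ => by
    rw [Matrix.mul_smul]

lemma rmul_neg (X : Fin g → Matrix (Fin n) (Fin n) ℂ)
    (M : Matrix (Fin g × Fin n) (Fin g × Fin n) ℂ) :
    rmul (-X) M = - rmul X M := by
  funext i
  simp [rmul]

section core

variable {Ξ : Fin g → Matrix (Fin g) (Fin g) ℂ}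
variable {X : Fin g → Matrix (Fin n) (Fin n) ℂ}

lemma q_rel (hU : IsUnit (1 + lamK Ξ X)) :
    rmul (rmul X (1 + lamK Ξ X)⁻¹) (1 + lamK Ξ X) = X := by
  rw [← rmul_mul, Matrix.nonsing_inv_mul _ ((Matrix.isUnit_iff_isUnit_det _).mp hU), rmul_one]

lemma q_decomp (hU : IsUnit (1 + lamK Ξ X)) :
    X = rmul X (1 + lamK Ξ X)⁻¹ + mulX Ξ (rmul X (1 + lamK Ξ X)⁻¹) X := by
  conv_lhs => rw [← q_rel hU]
  rw [rmul_add, rmul_one, rmul_lamK]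

lemma lamK_of_decomp {A : Fin g → Matrix (Fin d) (Fin d) ℂ}
    (hA : ∀ k j, A k * A j = ∑ s, (Ξ j) k s • A s)
    {q X : Fin g → Matrix (Fin n) (Fin n) ℂ}
    (hdec : X = q + mulX Ξ q X) :
    lamK A q * (1 + lamK A X) = lamK A X := by
  have h2 := congrArg (lamK A) hdec
  rw [lamK_add, ← lamK_mul hA] at h2
  rw [mul_add, mul_one]
  exact h2.symm

lemma one_sub_mul_one_add (hΞΞ : ∀ k j, Ξ k * Ξ j = ∑ s, (Ξ j) k s • Ξ s)
    (hU : IsUnit (1 + lamK Ξ X)) :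
    (1 - lamK Ξ (rmul X (1 + lamK Ξ X)⁻¹)) * (1 + lamK Ξ X) = 1 := by
  have h := lamK_of_decomp hΞΞ (q_decomp hU)
  rw [sub_mul, one_mul, h]
  abel

lemma isUnit_one_sub_lamK_q (hΞΞ : ∀ k j, Ξ k * Ξ j = ∑ s, (Ξ j) k s • Ξ s)
    (hU : IsUnit (1 + lamK Ξ X)) :
    IsUnit (1 - lamK Ξ (rmul X (1 + lamK Ξ X)⁻¹)) := by
  have h1 := one_sub_mul_one_add hΞΞ hU
  have h2 := mul_eq_one_comm.mp h1
  exact ⟨⟨_, _, h1, h2⟩, rfl⟩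

lemma inv_one_sub_lamK_q (hΞΞ : ∀ k j, Ξ k * Ξ j = ∑ s, (Ξ j) k s • Ξ s)
    (hU : IsUnit (1 + lamK Ξ X)) :
    (1 - lamK Ξ (rmul X (1 + lamK Ξ X)⁻¹))⁻¹ = 1 + lamK Ξ X :=
  Matrix.inv_eq_right_inv (one_sub_mul_one_add hΞΞ hU)

/-- p ∘ q = id -/
lemma p_of_q (hΞΞ : ∀ k j, Ξ k * Ξ j = ∑ s, (Ξ j) k s • Ξ s)
    (hU : IsUnit (1 + lamK Ξ X)) :
    rmul (rmul X (1 + lamK Ξ X)⁻¹)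
      (1 - lamK Ξ (rmul X (1 + lamK Ξ X)⁻¹))⁻¹ = X := by
  rw [inv_one_sub_lamK_q hΞΞ hU]
  exact q_rel hU

/- ### minus versions, for `p` -/

lemma p_rel' (hU : IsUnit (1 - lamK Ξ X)) :
    rmul (rmul X (1 - lamK Ξ X)⁻¹) (1 - lamK Ξ X) = X := by
  rw [← rmul_mul, Matrix.nonsing_inv_mul _ ((Matrix.isUnit_iff_isUnit_det _).mp hU), rmul_one]

lemma p_decomp (hU : IsUnit (1 - lamK Ξ X)) :
    X = rmul X (1 - lamK Ξ X)⁻¹ - mulX Ξ (rmul X (1 - lamK Ξ X)⁻¹) X := by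
  conv_lhs => rw [← p_rel' hU]
  rw [rmul_sub, rmul_one, rmul_lamK]

lemma lamK_of_decomp' {A : Fin g → Matrix (Fin d) (Fin d) ℂ}
    (hA : ∀ k j, A k * A j = ∑ s, (Ξ j) k s • A s)
    {p X : Fin g → Matrix (Fin n) (Fin n) ℂ}
    (hdec : X = p - mulX Ξ p X) :
    lamK A p * (1 - lamK A X) = lamK A X := by
  have h2 := congrArg (lamK A) hdec
  rw [lamK_sub, ← lamK_mul hA] at h2
  rw [mul_sub, mul_one]
  exact h2.symm

lemma one_add_mul_one_sub (hΞΞ : ∀ k j, Ξ k * Ξ j = ∑ s, (Ξ j) k s • Ξ s)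
    (hU : IsUnit (1 - lamK Ξ X)) :
    (1 + lamK Ξ (rmul X (1 - lamK Ξ X)⁻¹)) * (1 - lamK Ξ X) = 1 := by
  have h := lamK_of_decomp' hΞΞ (p_decomp hU)
  rw [add_mul, one_mul, h]
  abel

lemma isUnit_one_add_lamK_p (hΞΞ : ∀ k j, Ξ k * Ξ j = ∑ s, (Ξ j) k s • Ξ s)
    (hU : IsUnit (1 - lamK Ξ X)) :
    IsUnit (1 + lamK Ξ (rmul X (1 - lamK Ξ X)⁻¹)) := by
  have h1 := one_add_mul_one_sub hΞΞ hU
  have h2 := mul_eq_one_comm.mp h1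
  exact ⟨⟨_, _, h1, h2⟩, rfl⟩

lemma inv_one_add_lamK_p (hΞΞ : ∀ k j, Ξ k * Ξ j = ∑ s, (Ξ j) k s • Ξ s)
    (hU : IsUnit (1 - lamK Ξ X)) :
    (1 + lamK Ξ (rmul X (1 - lamK Ξ X)⁻¹))⁻¹ = 1 - lamK Ξ X :=
  Matrix.inv_eq_right_inv (one_add_mul_one_sub hΞΞ hU)

/-- q ∘ p = id -/
lemma q_of_p (hΞΞ : ∀ k j, Ξ k * Ξ j = ∑ s, (Ξ j) k s • Ξ s)
    (hU : IsUnit (1 - lamK Ξ X)) :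
    rmul (rmul X (1 - lamK Ξ X)⁻¹)
      (1 + lamK Ξ (rmul X (1 - lamK Ξ X)⁻¹))⁻¹ = X := by
  rw [inv_one_add_lamK_p hΞΞ hU]
  exact p_rel' hU

end core

lemma lamK_zero (A : Fin g → Matrix (Fin d) (Fin d) ℂ) :
    lamK (n := n) A 0 = 0 := by
  ext ⟨c, a⟩ ⟨e, b⟩
  simp [lamK_apply]

/-- transfer of invertibility from the `J`-level to the `Ξ`-level -/
lemma isUnit_transfer {J : Fin g → Matrix (Fin d) (Fin d) ℂ}
    {Ξ : Fin g → Matrix (Fin g) (Fin g) ℂ}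
    (hli : LinearIndependent ℂ J)
    (hΞ : ∀ k j, J k * J j = ∑ s, (Ξ j) k s • J s)
    {X : Fin g → Matrix (Fin n) (Fin n) ℂ}
    (hU : IsUnit (1 + lamK J X)) : IsUnit (1 + lamK Ξ X) := by
  rw [Matrix.isUnit_iff_isUnit_det, isUnit_iff_ne_zero]
  intro hdet
  obtain ⟨v, hv, hv0⟩ := Matrix.exists_vecMul_eq_zero_iff.mpr hdet
  set V : Fin g → Matrix (Fin n) (Fin n) ℂ := fun k => fun a b => v (k, b) with hV
  have hrm0 : rmul V (1 + lamK Ξ X) = 0 := by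
    funext i; ext a b
    have h5 : (rmul V (1 + lamK Ξ X)) i a b = (v ᵥ* (1 + lamK Ξ X)) (i, b) := by
      simp only [rmul, Matrix.sum_apply, Matrix.mul_apply]
      simp [rmul, blk, Matrix.sum_apply, Matrix.mul_apply, Matrix.vecMul,
        dotProduct, Fintype.sum_prod_type, hV]
    rw [h5, hv0]
    rfl
  have hd := rmul_add V 1 (lamK Ξ X)
  rw [rmul_one, rmul_lamK] at hd
  have hrm : V + mulX Ξ V X = 0 := by rw [← hd]; exact hrm0
  have h1 : lamK J V * (1 + lamK J X) = 0 := by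
    have h2 : lamK J (V + mulX Ξ V X) = 0 := by rw [hrm, lamK_zero]
    rw [lamK_add, ← lamK_mul hΞ] at h2
    rw [mul_add, mul_one]
    exact h2
  have h3 : lamK J V = 0 := by
    have h4 := congrArg (· * (1 + lamK J X)⁻¹) h1
    simpa [mul_assoc,
      Matrix.mul_nonsing_inv _ ((Matrix.isUnit_iff_isUnit_det _).mp hU)] using h4
  have hV0 : V = 0 := lamK_eq_zero hli h3
  obtain ⟨⟨k, b⟩, hkb⟩ := Function.ne_iff.mp hv
  exact hkb (by simpa [hV] using congrFun (congrFun (congrFun hV0 k) b) b)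


end aux

section aux2
set_option linter.unusedSectionVars false
variable {ι κ : Type*} [Fintype ι] [DecidableEq ι] [Fintype κ] [DecidableEq κ]

def toE (w : ι → ℂ) : EuclideanSpace ℂ ι := (WithLp.equiv 2 (ι → ℂ)).symm w

lemma dot_star_self_eq (w : ι → ℂ) : star w ⬝ᵥ w = ((‖toE w‖ ^ 2 : ℝ) : ℂ) := by
  rw [EuclideanSpace.norm_eq, Real.sq_sqrt (by positivity)]
  push_cast
  simp only [dotProduct, Pi.star_apply]
  refine Finset.sum_congr rfl fun i _ => ?_
  have : toE w i = w i := rfl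
  rw [this]
  rw [Complex.star_def, ← Complex.normSq_eq_conj_mul_self, Complex.normSq_eq_norm_sq]
  push_cast
  ring

lemma norm_le_one_iff_psd (M : Matrix ι ι ℂ) :
    (1 - Mᴴ * M).PosSemidef ↔ ‖M‖ ≤ 1 := by
  have key : ∀ x : ι → ℂ, star x ⬝ᵥ ((1 - Mᴴ * M) *ᵥ x)
      = ((‖toE x‖ ^ 2 - ‖toE (M *ᵥ x)‖ ^ 2 : ℝ) : ℂ) := by
    intro x
    rw [Matrix.sub_mulVec, Matrix.one_mulVec, dotProduct_sub, ← Matrix.mulVec_mulVec,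
      Matrix.dotProduct_mulVec, ← Matrix.star_mulVec, dot_star_self_eq, dot_star_self_eq]
    push_cast
    ring
  constructor
  · intro hpsd
    rw [Matrix.l2_opNorm_def]
    refine ContinuousLinearMap.opNorm_le_bound _ zero_le_one fun x => ?_
    have h1 := hpsd.dotProduct_mulVec_nonneg ((WithLp.equiv 2 (ι → ℂ)) x)
    rw [key] at h1
    rw [Complex.zero_le_real, sub_nonneg] at h1
    have h2 : ‖toE (M *ᵥ (WithLp.equiv 2 (ι → ℂ)) x)‖ ≤ ‖toE ((WithLp.equiv 2 (ι → ℂ)) x)‖ := by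
      nlinarith [norm_nonneg (toE (M *ᵥ (WithLp.equiv 2 (ι → ℂ)) x)),
        norm_nonneg (toE ((WithLp.equiv 2 (ι → ℂ)) x))]
    rw [one_mul]
    calc ‖(Matrix.toEuclideanLin.trans LinearMap.toContinuousLinearMap M) x‖
        = ‖toE (M *ᵥ (WithLp.equiv 2 (ι → ℂ)) x)‖ := rfl
      _ ≤ ‖toE ((WithLp.equiv 2 (ι → ℂ)) x)‖ := h2
      _ = ‖x‖ := rfl
  · intro hnorm
    refine Matrix.PosSemidef.of_dotProduct_mulVec_nonneg ?_ ?_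
    · exact (Matrix.isHermitian_one).sub (Matrix.isHermitian_conjTranspose_mul_self M)
    · intro x
      rw [key, Complex.zero_le_real, sub_nonneg]
      have h3 : ‖toE (M *ᵥ x)‖ ≤ ‖M‖ * ‖toE x‖ := Matrix.l2_opNorm_mulVec M (toE x)
      have h4 : ‖toE (M *ᵥ x)‖ ≤ ‖toE x‖ := by
        calc ‖toE (M *ᵥ x)‖ ≤ ‖M‖ * ‖toE x‖ := h3
        _ ≤ 1 * ‖toE x‖ := mul_le_mul_of_nonneg_right hnorm (norm_nonneg _)
        _ = ‖toE x‖ := one_mul _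
      nlinarith [norm_nonneg (toE (M *ᵥ x)), norm_nonneg (toE x)]

set_option linter.unusedSectionVars false

lemma isUnit_one_add_of_psd {M : Matrix ι ι ℂ} (h : (1 + M + Mᴴ).PosSemidef) :
    IsUnit (1 + M) := by
  rw [Matrix.isUnit_iff_isUnit_det, isUnit_iff_ne_zero]
  intro hdet
  obtain ⟨v, hv, hv0⟩ := Matrix.exists_mulVec_eq_zero_iff.mpr hdet
  have hMv : M *ᵥ v = -v := by
    have := hv0
    rw [Matrix.add_mulVec, Matrix.one_mulVec] at this
    linear_combination (norm := module) this
  have h2 := h.dotProduct_mulVec_nonneg v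
  rw [Matrix.add_mulVec, Matrix.add_mulVec, Matrix.one_mulVec, hMv] at h2
  have h3 : star v ⬝ᵥ (Mᴴ *ᵥ v) = -(star v ⬝ᵥ v) := by
    rw [Matrix.dotProduct_mulVec, ← Matrix.star_mulVec, hMv]
    simp [dotProduct]
  rw [dotProduct_add, dotProduct_add, h3] at h2
  simp only [dotProduct_neg] at h2
  have h4 : star v ⬝ᵥ v ≤ 0 := by
    have : (0 : ℂ) ≤ -(star v ⬝ᵥ v) := by
      calc (0:ℂ) ≤ star v ⬝ᵥ v + -(star v ⬝ᵥ v) + -(star v ⬝ᵥ v) := h2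
        _ = -(star v ⬝ᵥ v) := by ring
    exact neg_nonneg.mp this
  have h5 := dotProduct_star_self_nonneg v
  exact hv (dotProduct_star_self_eq_zero.mp (le_antisymm h4 h5))

lemma cong1 {A B M C : Matrix ι ι ℂ} (hM : M * A = C) (hAB : A * B = 1) :
    1 - Mᴴ * M = Bᴴ * (Aᴴ * A - Cᴴ * C) * B := by
  have hCB : C * B = M := by rw [← hM, mul_assoc, hAB, mul_one]
  have e1 : Bᴴ * (Aᴴ * A - Cᴴ * C) * B
      = (A * B)ᴴ * (A * B) - (C * B)ᴴ * (C * B) := by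
    simp only [Matrix.conjTranspose_mul]
    noncomm_ring
  rw [e1, hAB, hCB]
  simp

lemma cong2 {A B M C : Matrix ι ι ℂ} (hM : M * A = C) (hAB : A * B = 1) :
    1 + M + Mᴴ = Bᴴ * (Aᴴ * A + Aᴴ * C + Cᴴ * A) * B := by
  have hCB : C * B = M := by rw [← hM, mul_assoc, hAB, mul_one]
  have e1 : Bᴴ * (Aᴴ * A + Aᴴ * C + Cᴴ * A) * B
      = (A * B)ᴴ * (A * B) + (A * B)ᴴ * (C * B) + (C * B)ᴴ * (A * B) := by
    simp only [Matrix.conjTranspose_mul]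
    noncomm_ring
  rw [e1, hAB, hCB]
  simp

lemma expand1 (Λ : Matrix ι ι ℂ) :
    (1 + Λ)ᴴ * (1 + Λ) - Λᴴ * Λ = 1 + Λ + Λᴴ := by
  simp only [Matrix.conjTranspose_add, Matrix.conjTranspose_one]
  noncomm_ring

lemma expand2 (Λ : Matrix ι ι ℂ) :
    (1 - Λ)ᴴ * (1 - Λ) + (1 - Λ)ᴴ * Λ + Λᴴ * (1 - Λ) = 1 - Λᴴ * Λ := by
  simp only [Matrix.conjTranspose_sub, Matrix.conjTranspose_one]
  noncomm_ring

lemma esq (y : ι → ℂ) : ‖toE y‖ ^ 2 = ∑ i, ‖y i‖ ^ 2 := by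
  have h := EuclideanSpace.norm_eq (toE y)
  rw [h, Real.sq_sqrt (by positivity)]
  rfl

variable {d n : ℕ}

lemma one_kron_norm_le (B : Matrix (Fin n) (Fin n) ℂ) :
    ‖(1 : Matrix (Fin d) (Fin d) ℂ) ⊗ₖ B‖ ≤ ‖B‖ := by
  rw [Matrix.l2_opNorm_def]
  refine ContinuousLinearMap.opNorm_le_bound _ (norm_nonneg B) fun x => ?_
  set w : Fin d × Fin n → ℂ := (WithLp.equiv 2 (Fin d × Fin n → ℂ)) x with hw
  have happ : ∀ c a, (((1 : Matrix (Fin d) (Fin d) ℂ) ⊗ₖ B) *ᵥ w) (c, a)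
      = (B *ᵥ fun b => w (c, b)) a := by
    intro c a
    simp [Matrix.mulVec, dotProduct, Fintype.sum_prod_type, Matrix.one_apply,
      ite_mul, zero_mul, Finset.sum_ite_eq, Finset.mem_univ]
  have hsq : ‖toE (((1 : Matrix (Fin d) (Fin d) ℂ) ⊗ₖ B) *ᵥ w)‖ ^ 2 ≤ (‖B‖ * ‖x‖) ^ 2 := by
    rw [esq]
    calc ∑ p : Fin d × Fin n, ‖(((1 : Matrix (Fin d) (Fin d) ℂ) ⊗ₖ B) *ᵥ w) p‖ ^ 2
        = ∑ c, ∑ a, ‖(B *ᵥ fun b => w (c, b)) a‖ ^ 2 := by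
          rw [Fintype.sum_prod_type]
          exact Finset.sum_congr rfl fun c _ => Finset.sum_congr rfl fun a _ => by rw [happ]
      _ = ∑ c, ‖toE (B *ᵥ fun b => w (c, b))‖ ^ 2 := by
          exact Finset.sum_congr rfl fun c _ => (esq _).symm
      _ ≤ ∑ c, (‖B‖ * ‖toE fun b => w (c, b)‖) ^ 2 := by
          refine Finset.sum_le_sum fun c _ => ?_
          have h' : ‖toE (B *ᵥ fun b => w (c, b))‖ ≤ ‖B‖ * ‖toE fun b => w (c, b)‖ :=
            Matrix.l2_opNorm_mulVec B (toE fun b => w (c, b))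
          nlinarith [h', norm_nonneg (toE (B *ᵥ fun b => w (c, b))),
            mul_nonneg (norm_nonneg B) (norm_nonneg (toE fun b => w (c, b)))]
      _ = ‖B‖ ^ 2 * ∑ c, ∑ b, ‖w (c, b)‖ ^ 2 := by
          rw [Finset.mul_sum]
          refine Finset.sum_congr rfl fun c _ => ?_
          rw [mul_pow, esq]
      _ = (‖B‖ * ‖x‖) ^ 2 := by
          have hx : ‖x‖ ^ 2 = ∑ c, ∑ b, ‖w (c, b)‖ ^ 2 := by
            have : ‖x‖ = ‖toE w‖ := rfl
            rw [this, esq, Fintype.sum_prod_type]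
          rw [← hx]
          ring
  have h0 : (0:ℝ) ≤ ‖B‖ * ‖x‖ := mul_nonneg (norm_nonneg _) (norm_nonneg _)
  show ‖toE (((1 : Matrix (Fin d) (Fin d) ℂ) ⊗ₖ B) *ᵥ w)‖ ≤ ‖B‖ * ‖x‖
  nlinarith [norm_nonneg (toE (((1 : Matrix (Fin d) (Fin d) ℂ) ⊗ₖ B) *ᵥ w))]

lemma kron_one_norm_le (A : Matrix (Fin d) (Fin d) ℂ) :
    ‖A ⊗ₖ (1 : Matrix (Fin n) (Fin n) ℂ)‖ ≤ ‖A‖ := by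
  rw [Matrix.l2_opNorm_def]
  refine ContinuousLinearMap.opNorm_le_bound _ (norm_nonneg A) fun x => ?_
  set w : Fin d × Fin n → ℂ := (WithLp.equiv 2 (Fin d × Fin n → ℂ)) x with hw
  have happ : ∀ c a, ((A ⊗ₖ (1 : Matrix (Fin n) (Fin n) ℂ)) *ᵥ w) (c, a)
      = (A *ᵥ fun e => w (e, a)) c := by
    intro c a
    simp [Matrix.mulVec, dotProduct, Fintype.sum_prod_type, Matrix.one_apply,
      mul_ite, mul_zero, ite_mul, zero_mul, Finset.sum_ite_eq, Finset.mem_univ]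
  have hsq : ‖toE ((A ⊗ₖ (1 : Matrix (Fin n) (Fin n) ℂ)) *ᵥ w)‖ ^ 2 ≤ (‖A‖ * ‖x‖) ^ 2 := by
    rw [esq]
    calc ∑ p : Fin d × Fin n, ‖((A ⊗ₖ (1 : Matrix (Fin n) (Fin n) ℂ)) *ᵥ w) p‖ ^ 2
        = ∑ a, ∑ c, ‖(A *ᵥ fun e => w (e, a)) c‖ ^ 2 := by
          rw [Fintype.sum_prod_type, Finset.sum_comm]
          exact Finset.sum_congr rfl fun a _ => Finset.sum_congr rfl fun c _ => by rw [happ]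
      _ = ∑ a, ‖toE (A *ᵥ fun e => w (e, a))‖ ^ 2 := by
          exact Finset.sum_congr rfl fun a _ => (esq _).symm
      _ ≤ ∑ a, (‖A‖ * ‖toE fun e => w (e, a)‖) ^ 2 := by
          refine Finset.sum_le_sum fun a _ => ?_
          have h' : ‖toE (A *ᵥ fun e => w (e, a))‖ ≤ ‖A‖ * ‖toE fun e => w (e, a)‖ :=
            Matrix.l2_opNorm_mulVec A (toE fun e => w (e, a))
          nlinarith [h', norm_nonneg (toE (A *ᵥ fun e => w (e, a))),
            mul_nonneg (norm_nonneg A) (norm_nonneg (toE fun e => w (e, a)))]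
      _ = ‖A‖ ^ 2 * ∑ a, ∑ e, ‖w (e, a)‖ ^ 2 := by
          rw [Finset.mul_sum]
          refine Finset.sum_congr rfl fun a _ => ?_
          rw [mul_pow, esq]
      _ = (‖A‖ * ‖x‖) ^ 2 := by
          have hx : ‖x‖ ^ 2 = ∑ a, ∑ e, ‖w (e, a)‖ ^ 2 := by
            have h : ‖x‖ = ‖toE w‖ := rfl
            rw [h, esq, Fintype.sum_prod_type, Finset.sum_comm]
          rw [← hx]
          ring
  have h0 : (0:ℝ) ≤ ‖A‖ * ‖x‖ := mul_nonneg (norm_nonneg _) (norm_nonneg _)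
  show ‖toE ((A ⊗ₖ (1 : Matrix (Fin n) (Fin n) ℂ)) *ᵥ w)‖ ≤ ‖A‖ * ‖x‖
  nlinarith [norm_nonneg (toE ((A ⊗ₖ (1 : Matrix (Fin n) (Fin n) ℂ)) *ᵥ w))]

lemma kron_norm_le (A : Matrix (Fin d) (Fin d) ℂ) (B : Matrix (Fin n) (Fin n) ℂ) :
    ‖A ⊗ₖ B‖ ≤ ‖A‖ * ‖B‖ := by
  have hfac : A ⊗ₖ B = (A ⊗ₖ (1 : Matrix (Fin n) (Fin n) ℂ))
      * ((1 : Matrix (Fin d) (Fin d) ℂ) ⊗ₖ B) := by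
    rw [← Matrix.mul_kronecker_mul, mul_one, one_mul]
  rw [hfac]
  calc ‖(A ⊗ₖ (1 : Matrix (Fin n) (Fin n) ℂ)) * ((1 : Matrix (Fin d) (Fin d) ℂ) ⊗ₖ B)‖
      ≤ ‖A ⊗ₖ (1 : Matrix (Fin n) (Fin n) ℂ)‖ * ‖(1 : Matrix (Fin d) (Fin d) ℂ) ⊗ₖ B‖ :=
        Matrix.l2_opNorm_mul _ _
    _ ≤ ‖A‖ * ‖B‖ := mul_le_mul (kron_one_norm_le A) (one_kron_norm_le B)
        (norm_nonneg _) (norm_nonneg _)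

end aux2

set_option linter.unusedSectionVars false
section mainaux

variable {g d n : ℕ} {J : Fin g → Matrix (Fin d) (Fin d) ℂ}
  {Ξ : Fin g → Matrix (Fin g) (Fin g) ℂ}

lemma isUnit_transfer_sub (hli : LinearIndependent ℂ J)
    (hΞ : ∀ k j, J k * J j = ∑ s, (Ξ j) k s • J s)
    {Y : Fin g → Matrix (Fin n) (Fin n) ℂ}
    (h : IsUnit (1 - lamK J Y)) : IsUnit (1 - lamK Ξ Y) := by
  have h2 : IsUnit (1 + lamK J (-Y)) := by rwa [lamK_neg, ← sub_eq_add_neg]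
  have h3 := isUnit_transfer hli hΞ h2
  rwa [lamK_neg, ← sub_eq_add_neg] at h3

lemma forward_all (hli : LinearIndependent ℂ J)
    (hΞ : ∀ k j, J k * J j = ∑ s, (Ξ j) k s • J s)
    {X : Fin g → Matrix (Fin n) (Fin n) ℂ} (hpsd : (Lpen J X).PosSemidef) :
    IsUnit (1 + lamK Ξ X) ∧ ‖lamK J (qmap Ξ X)‖ ≤ 1 ∧ pmap Ξ (qmap Ξ X) = X := by
  have hΞΞ := xi_mul hli hΞ
  have hpsd' : (1 + lamK J X + (lamK J X)ᴴ).PosSemidef := hpsd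
  have hUJ := isUnit_one_add_of_psd hpsd'
  have hUξ := isUnit_transfer hli hΞ hUJ
  have hqr : qmap Ξ X = rmul X (1 + lamK Ξ X)⁻¹ := rfl
  have hM : lamK J (qmap Ξ X) * (1 + lamK J X) = lamK J X := by
    rw [hqr]; exact lamK_of_decomp hΞ (q_decomp hUξ)
  have hAB : (1 + lamK J X) * (1 + lamK J X)⁻¹ = 1 :=
    Matrix.mul_nonsing_inv _ ((Matrix.isUnit_iff_isUnit_det _).mp hUJ)
  have hpsd2 : (1 - (lamK J (qmap Ξ X))ᴴ * lamK J (qmap Ξ X)).PosSemidef := by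
    rw [cong1 hM hAB, expand1]
    exact hpsd'.conjTranspose_mul_mul_same _
  refine ⟨hUξ, (norm_le_one_iff_psd _).mp hpsd2, ?_⟩
  have hpq : pmap Ξ (qmap Ξ X)
      = rmul (rmul X (1 + lamK Ξ X)⁻¹) (1 - lamK Ξ (rmul X (1 + lamK Ξ X)⁻¹))⁻¹ := rfl
  rw [hpq]
  exact p_of_q hΞΞ hUξ

lemma backward_all (hli : LinearIndependent ℂ J)
    (hΞ : ∀ k j, J k * J j = ∑ s, (Ξ j) k s • J s)
    {Y : Fin g → Matrix (Fin n) (Fin n) ℂ} (hnorm : ‖lamK J Y‖ ≤ 1)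
    (hUm : IsUnit (1 - lamK J Y)) :
    IsUnit (1 - lamK Ξ Y) ∧ (Lpen J (pmap Ξ Y)).PosSemidef ∧ qmap Ξ (pmap Ξ Y) = Y := by
  have hΞΞ := xi_mul hli hΞ
  have hUξm := isUnit_transfer_sub hli hΞ hUm
  have hpr : pmap Ξ Y = rmul Y (1 - lamK Ξ Y)⁻¹ := rfl
  have hM : lamK J (pmap Ξ Y) * (1 - lamK J Y) = lamK J Y := by
    rw [hpr]; exact lamK_of_decomp' hΞ (p_decomp hUξm)
  have hAB : (1 - lamK J Y) * (1 - lamK J Y)⁻¹ = 1 :=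
    Matrix.mul_nonsing_inv _ ((Matrix.isUnit_iff_isUnit_det _).mp hUm)
  have hpsd1 : (1 - (lamK J Y)ᴴ * lamK J Y).PosSemidef := (norm_le_one_iff_psd _).mpr hnorm
  have hpsdW : (Lpen J (pmap Ξ Y)).PosSemidef := by
    show (1 + lamK J (pmap Ξ Y) + (lamK J (pmap Ξ Y))ᴴ).PosSemidef
    rw [cong2 hM hAB, expand2]
    exact hpsd1.conjTranspose_mul_mul_same _
  refine ⟨hUξm, hpsdW, ?_⟩
  have hqp : qmap Ξ (pmap Ξ Y)
      = rmul (rmul Y (1 - lamK Ξ Y)⁻¹) (1 + lamK Ξ (rmul Y (1 - lamK Ξ Y)⁻¹))⁻¹ := rfl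
  rw [hqp]
  exact q_of_p hΞΞ hUξm

lemma unit_from_bounded (hli : LinearIndependent ℂ J)
    (hΞ : ∀ k j, J k * J j = ∑ s, (Ξ j) k s • J s)
    (hbdd : Bornology.IsBounded {X : Fin g → Matrix (Fin n) (Fin n) ℂ | (Lpen J X).PosSemidef})
    {Y : Fin g → Matrix (Fin n) (Fin n) ℂ} (hnorm : ‖lamK J Y‖ ≤ 1) :
    IsUnit (1 - lamK J Y) := by
  by_contra hUn
  have hdet : (1 - lamK J Y).det = 0 := by
    by_contra hd
    exact hUn ((Matrix.isUnit_iff_isUnit_det _).mpr (isUnit_iff_ne_zero.mpr hd))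
  obtain ⟨u, hu, hu0⟩ := Matrix.exists_mulVec_eq_zero_iff.mpr hdet
  have hYu : lamK J Y *ᵥ u = u := by
    rw [Matrix.sub_mulVec, Matrix.one_mulVec] at hu0
    exact (sub_eq_zero.mp hu0).symm
  obtain ⟨C, hC⟩ := hbdd.exists_norm_le
  have hC0 : 0 ≤ C := by
    have h0 : (Lpen J (0 : Fin g → Matrix (Fin n) (Fin n) ℂ)).PosSemidef := by
      show (1 + lamK J 0 + (lamK J 0)ᴴ).PosSemidef
      rw [lamK_zero]
      simpa using (Matrix.PosDef.one).posSemidef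
    exact le_trans (norm_nonneg _) (hC 0 h0)
  set K := (∑ j, ‖J j‖) * C with hK
  have hK0 : 0 ≤ K := mul_nonneg (Finset.sum_nonneg fun j _ => norm_nonneg _) hC0
  have hWbound : ∀ W : Fin g → Matrix (Fin n) (Fin n) ℂ,
      (Lpen J W).PosSemidef → ‖lamK J W‖ ≤ K := by
    intro W hW
    calc ‖lamK J W‖ ≤ ∑ j, ‖J j ⊗ₖ W j‖ := norm_sum_le _ _
      _ ≤ ∑ j, ‖J j‖ * C := by
          refine Finset.sum_le_sum fun j _ => ?_
          refine le_trans (kron_norm_le _ _) ?_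
          refine mul_le_mul_of_nonneg_left ?_ (norm_nonneg _)
          exact le_trans (norm_le_pi_norm W j) (hC W hW)
      _ = K := by rw [hK, Finset.sum_mul]
  set t : ℝ := (K + 1) / (K + 2) with htdef
  have hK2 : (0:ℝ) < K + 2 := by linarith
  have ht0 : 0 < t := div_pos (by linarith) hK2
  have ht1 : t < 1 := by rw [div_lt_one hK2]; linarith
  set Y' : Fin g → Matrix (Fin n) (Fin n) ℂ := (t:ℂ) • Y with hY'
  have hΛ' : lamK J Y' = (t:ℂ) • lamK J Y := lamK_smul _ _ _
  have htnorm : ‖(t:ℂ)‖ = t := by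
    rw [Complex.norm_real, Real.norm_eq_abs, abs_of_pos ht0]
  have hUm' : IsUnit (1 - lamK J Y') := by
    rw [Matrix.isUnit_iff_isUnit_det, isUnit_iff_ne_zero]
    intro hdet'
    obtain ⟨v, hv, hv0⟩ := Matrix.exists_mulVec_eq_zero_iff.mpr hdet'
    have hvv : v = (t:ℂ) • (lamK J Y *ᵥ v) := by
      rw [Matrix.sub_mulVec, Matrix.one_mulVec, hΛ', Matrix.smul_mulVec] at hv0
      exact sub_eq_zero.mp hv0
    have hvE : (0:ℝ) < ‖toE v‖ := by
      rw [norm_pos_iff]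
      exact fun h => hv (by simpa [toE] using h)
    have h1 : ‖toE v‖ = t * ‖toE (lamK J Y *ᵥ v)‖ := by
      have h1' : toE v = (t:ℂ) • toE (lamK J Y *ᵥ v) := congrArg toE hvv
      rw [h1', norm_smul, htnorm]
    have h2 : ‖toE (lamK J Y *ᵥ v)‖ ≤ ‖toE v‖ := by
      have h3 : ‖toE (lamK J Y *ᵥ v)‖ ≤ ‖lamK J Y‖ * ‖toE v‖ :=
        Matrix.l2_opNorm_mulVec _ (toE v)
      nlinarith [norm_nonneg (toE v)]
    nlinarith
  have hUξm' := isUnit_transfer_sub hli hΞ hUm'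
  have hnorm' : ‖lamK J Y'‖ ≤ 1 := by
    rw [hΛ', norm_smul, htnorm]
    nlinarith
  have hpsdW := (backward_all hli hΞ hnorm' hUm').2.1
  have hΞΞ := xi_mul hli hΞ
  have hMW : lamK J (pmap Ξ Y') * (1 - lamK J Y') = lamK J Y' := by
    have hpr : pmap Ξ Y' = rmul Y' (1 - lamK Ξ Y')⁻¹ := rfl
    rw [hpr]; exact lamK_of_decomp' hΞ (p_decomp hUξm')
  have hu' : (1 - lamK J Y') *ᵥ u = ((1 - t : ℝ):ℂ) • u := by
    rw [Matrix.sub_mulVec, Matrix.one_mulVec, hΛ', Matrix.smul_mulVec, hYu]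
    have hc : ((1 - t : ℝ):ℂ) = 1 - (t:ℂ) := by push_cast; ring
    rw [hc, sub_smul, one_smul]
  have happ : ((1 - t : ℝ):ℂ) • (lamK J (pmap Ξ Y') *ᵥ u) = (t:ℂ) • u := by
    have h4 := congrArg (fun M => M *ᵥ u) hMW
    rw [← Matrix.mulVec_mulVec, hu', Matrix.mulVec_smul] at h4
    rw [h4, hΛ', Matrix.smul_mulVec, hYu]
  have hnormeq : (1 - t) * ‖toE (lamK J (pmap Ξ Y') *ᵥ u)‖ = t * ‖toE u‖ := by
    have h5 := congrArg (fun w => ‖toE w‖) happ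
    have h6 : ‖((1 - t : ℝ):ℂ) • toE (lamK J (pmap Ξ Y') *ᵥ u)‖
        = ‖((1 - t : ℝ):ℂ)‖ * ‖toE (lamK J (pmap Ξ Y') *ᵥ u)‖ := norm_smul _ _
    have h7 : ‖((t : ℝ):ℂ) • toE u‖ = ‖((t : ℝ):ℂ)‖ * ‖toE u‖ := norm_smul _ _
    have h8 : ‖((1 - t : ℝ):ℂ)‖ = 1 - t := by
      rw [Complex.norm_real, Real.norm_eq_abs, abs_of_pos (by linarith)]
    have h9 : ‖((t : ℝ):ℂ)‖ = t := htnorm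
    calc (1 - t) * ‖toE (lamK J (pmap Ξ Y') *ᵥ u)‖
        = ‖((1 - t : ℝ):ℂ) • toE (lamK J (pmap Ξ Y') *ᵥ u)‖ := by rw [h6, h8]
      _ = ‖((t : ℝ):ℂ) • toE u‖ := h5
      _ = t * ‖toE u‖ := by rw [h7, h9]
  have huE : (0:ℝ) < ‖toE u‖ := by
    rw [norm_pos_iff]
    exact fun h => hu (by simpa [toE] using h)
  have hWu : ‖toE (lamK J (pmap Ξ Y') *ᵥ u)‖ ≤ K * ‖toE u‖ := by
    have h10 : ‖toE (lamK J (pmap Ξ Y') *ᵥ u)‖ ≤ ‖lamK J (pmap Ξ Y')‖ * ‖toE u‖ :=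
      Matrix.l2_opNorm_mulVec _ (toE u)
    nlinarith [hWbound _ hpsdW, norm_nonneg (toE u)]
  -- t * ‖u‖ = (1-t) * ‖Wu‖ ≤ (1-t) * K * ‖u‖, so t ≤ (1-t) * K, i.e. K+1 ≤ K
  have hfin : t ≤ (1 - t) * K := by
    have := hnormeq
    nlinarith [huE, mul_le_mul_of_nonneg_left hWu (le_of_lt (by linarith : (0:ℝ) < 1 - t))]
  rw [htdef] at hfin
  rw [div_le_iff₀ hK2] at hfin
  have e : (1 - (K + 1) / (K + 2)) * (K + 2) = 1 := by
    field_simp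
    norm_num
  nlinarith [hfin, e, hK0]

end mainaux


theorem qmap_bijection_spectrahedron_spectraball {g d : ℕ}
    (J : Fin g → Matrix (Fin d) (Fin d) ℂ)
    (Ξ : Fin g → Matrix (Fin g) (Fin g) ℂ)
    (hli : LinearIndependent ℂ J)
    (hmul : ∀ k j, J k * J j ∈ Submodule.span ℂ (Set.range J))
    (hΞ : ∀ k j, J k * J j = ∑ s, (Ξ j) k s • J s)
    (hbdd : ∀ n : ℕ,
      Bornology.IsBounded {X : Fin g → Matrix (Fin n) (Fin n) ℂ | (Lpen J X).PosSemidef}) :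
    ∀ n : ℕ,
      (∀ X : Fin g → Matrix (Fin n) (Fin n) ℂ, (Lpen J X).PosSemidef →
        IsUnit (1 + lamK Ξ X) ∧ ‖lamK J (qmap Ξ X)‖ ≤ 1 ∧ pmap Ξ (qmap Ξ X) = X) ∧
      (∀ Y : Fin g → Matrix (Fin n) (Fin n) ℂ, ‖lamK J Y‖ ≤ 1 →
        IsUnit (1 - lamK Ξ Y) ∧ (Lpen J (pmap Ξ Y)).PosSemidef ∧ qmap Ξ (pmap Ξ Y) = Y) ∧
      Set.BijOn (qmap Ξ) {X : Fin g → Matrix (Fin n) (Fin n) ℂ | (Lpen J X).PosSemidef}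
        {Y : Fin g → Matrix (Fin n) (Fin n) ℂ | ‖lamK J Y‖ ≤ 1} := by
  intro n
  have hbw : ∀ Y : Fin g → Matrix (Fin n) (Fin n) ℂ, ‖lamK J Y‖ ≤ 1 →
      IsUnit (1 - lamK Ξ Y) ∧ (Lpen J (pmap Ξ Y)).PosSemidef ∧ qmap Ξ (pmap Ξ Y) = Y :=
    fun Y hY => backward_all hli hΞ hY (unit_from_bounded hli hΞ (hbdd n) hY)
  refine ⟨fun X hX => forward_all hli hΞ hX, hbw, ?_, ?_, ?_⟩
  · intro X hX
    exact (forward_all hli hΞ hX).2.1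
  · intro X1 h1 X2 h2 heq
    have e1 := (forward_all hli hΞ h1).2.2
    have e2 := (forward_all hli hΞ h2).2.2
    rw [← e1, ← e2, heq]
  · intro Y hY
    exact ⟨pmap Ξ Y, (hbw Y hY).2.1, (hbw Y hY).2.2⟩
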